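/- Let n ≥ 1, θ₀ > 0, w₀ ∈ (0,1) and π̂ = θ₀ w₀, so π̂ < θ₀. Let u_1, …, u_n be i.i.d. uniform on (0,1) and w = max_i u_i. Then the parametric-bootstrap estimator θ̂_Boot := π̂ · w has an absolutely continuous law with density θ ↦ n θ^{n−1} / π̂^n on (0, π̂) (the power-function distribution) and density 0 elsewhere; in particular θ̂_Boot < π̂ < θ₀ almost surely, so P(θ̂_Boot ≥ θ₀) = 0: the support (0, π̂) of the bootstrap distribution is disjoint from the support (π̂, ∞) of the SwiZs distribution, and any interval built from the percentiles of the bootstrap distribution never contains θ₀ (zero coverage). -/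

import Mathlib

open MeasureTheory ProbabilityTheory

/-!
STATEMENT 19 (Example `ch2:ex:unif`, parametric bootstrap for the uniform upper bound).

Uniform model with unknown upper bound: `π̂ = θ₀ w₀` with `θ₀ > 0`, `w₀ ∈ (0,1)`, so
`π̂ < θ₀`.  With `u 1, …, u n` i.i.d. uniform on `(0,1)` and `w = max_i u i`, the
parametric-bootstrap estimator `θ̂_Boot = π̂ · w` has the power-function distribution
with density `θ ↦ n θ^(n-1) / π̂ⁿ` on `(0, π̂)` (and `0` elsewhere); moreover
`θ̂_Boot < π̂ < θ₀` almost surely, so `P (θ̂_Boot ≥ θ₀) = 0`: the bootstrap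
distribution, supported on `(0, π̂)`, never covers `θ₀`.
-/

lemma power_lintegral (n : ℕ) (hn : 1 ≤ n) (c : ℝ) (hc : 0 < c) (a : ℝ) (ha : 0 ≤ a) :
    ∫⁻ θ in Set.Ioc 0 a, ENNReal.ofReal ((n : ℝ) * θ ^ (n - 1) / c ^ n)
      = ENNReal.ofReal (a ^ n / c ^ n) := by
  have hint : IntegrableOn (fun θ : ℝ => (n : ℝ) * θ ^ (n - 1) / c ^ n) (Set.Ioc 0 a) :=
    (((continuous_const.mul (continuous_pow (n - 1))).div_const _)).integrableOn_Ioc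
  have hnn : 0 ≤ᵐ[volume.restrict (Set.Ioc 0 a)]
      fun θ : ℝ => (n : ℝ) * θ ^ (n - 1) / c ^ n := by
    filter_upwards [self_mem_ae_restrict measurableSet_Ioc] with θ hθ
    exact div_nonneg (mul_nonneg (Nat.cast_nonneg n) (pow_nonneg hθ.1.le _)) (pow_nonneg hc.le _)
  rw [← ofReal_integral_eq_lintegral_ofReal hint hnn]
  congr 1
  rw [← intervalIntegral.integral_of_le ha]
  have : ∫ x in (0:ℝ)..a, (n : ℝ) * x ^ (n - 1) / c ^ n
      = (∫ x in (0:ℝ)..a, (n : ℝ) * x ^ (n - 1)) / c ^ n := by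
    simp [intervalIntegral.integral_div]
  rw [this, intervalIntegral.integral_const_mul, integral_pow]
  have h1 : n - 1 + 1 = n := Nat.sub_add_cancel hn
  rw [h1]
  have hn0 : (n : ℝ) ≠ 0 := Nat.cast_ne_zero.mpr (by omega)
  rw [zero_pow (by omega : n ≠ 0)]
  field_simp
  have h2 : ((n - 1 : ℕ) : ℝ) + 1 = n := by exact_mod_cast h1
  rw [h2, sub_zero]
  ring

theorem bootstrap_uniform_upper_bound_power_function
    {Ω : Type*} [MeasurableSpace Ω] (P : Measure Ω) [IsProbabilityMeasure P]
    (n : ℕ) (hn : 1 ≤ n)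
    (θ₀ w₀ : ℝ) (hθ₀ : 0 < θ₀) (hw₀ : w₀ ∈ Set.Ioo (0 : ℝ) 1)
    (u : Fin n → Ω → ℝ) (hmeas : ∀ i, Measurable (u i))
    (hindep : iIndepFun u P)
    (hunif : ∀ i, P.map (u i) = volume.restrict (Set.Ioo (0 : ℝ) 1)) :
    P.map (fun ω => (θ₀ * w₀) * ⨆ i, u i ω) =
      volume.withDensity (fun θ => ENNReal.ofReal
        (if 0 < θ ∧ θ < θ₀ * w₀ then n * θ ^ (n - 1) / (θ₀ * w₀) ^ n else 0)) ∧
      (∀ᵐ ω ∂P, (θ₀ * w₀) * (⨆ i, u i ω) < θ₀ * w₀ ∧ θ₀ * w₀ < θ₀) ∧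
      P {ω | θ₀ ≤ (θ₀ * w₀) * ⨆ i, u i ω} = 0 := by
  have hne : Nonempty (Fin n) := Fin.pos_iff_nonempty.mp (by omega)
  set c : ℝ := θ₀ * w₀ with hcdef
  have hc : 0 < c := mul_pos hθ₀ hw₀.1
  -- measurability of the max
  have hM : Measurable fun ω => ⨆ i, u i ω := by
    have h1 : (fun ω => ⨆ i, u i ω)
        = Finset.univ.sup' Finset.univ_nonempty u := by
      funext ω
      rw [Finset.sup'_apply, Finset.sup'_univ_eq_ciSup]
    rw [h1]
    exact Finset.measurable_sup' _ fun i _ => hmeas i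
  have hg : Measurable fun ω => c * ⨆ i, u i ω := measurable_const.mul hM
  -- a.e. statements
  have hae : ∀ᵐ ω ∂P, ∀ i, u i ω ∈ Set.Ioo (0 : ℝ) 1 := by
    rw [ae_all_iff]
    intro i
    have h0 : P (u i ⁻¹' (Set.Ioo (0:ℝ) 1)ᶜ) = 0 := by
      rw [← Measure.map_apply (hmeas i) measurableSet_Ioo.compl, hunif i,
        Measure.restrict_apply measurableSet_Ioo.compl]
      simp
    exact h0
  have haemax : ∀ᵐ ω ∂P, c * (⨆ i, u i ω) < c ∧ c < θ₀ := by
    filter_upwards [hae] with ω hω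
    obtain ⟨j, hj⟩ := exists_eq_ciSup_of_finite (f := fun i => u i ω)
    constructor
    · have hlt : (⨆ i, u i ω) < 1 := hj ▸ (hω j).2
      calc c * (⨆ i, u i ω) < c * 1 := by
            exact mul_lt_mul_of_pos_left hlt hc
        _ = c := mul_one c
    · calc c = θ₀ * w₀ := rfl
        _ < θ₀ * 1 := mul_lt_mul_of_pos_left hw₀.2 hθ₀
        _ = θ₀ := mul_one θ₀
  refine ⟨?_, haemax, ?_⟩
  · -- the law
    have hprob : IsProbabilityMeasure (P.map fun ω => c * ⨆ i, u i ω) :=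
      Measure.isProbabilityMeasure_map hg.aemeasurable
    -- indicator form of the density
    have hdens : (fun θ : ℝ => ENNReal.ofReal
        (if 0 < θ ∧ θ < c then n * θ ^ (n - 1) / c ^ n else 0))
        = (Set.Ioo (0:ℝ) c).indicator
            (fun θ => ENNReal.ofReal ((n : ℝ) * θ ^ (n - 1) / c ^ n)) := by
      funext θ
      by_cases h : θ ∈ Set.Ioo (0:ℝ) c
      · rw [Set.indicator_of_mem h, if_pos ⟨h.1, h.2⟩]
      · rw [Set.indicator_of_notMem h, if_neg (by simpa [Set.mem_Ioo] using h)]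
        simp
    rw [hdens]
    refine Measure.ext_of_Iic _ _ fun t => ?_
    -- LHS
    have hlhs : (P.map fun ω => c * ⨆ i, u i ω) (Set.Iic t)
        = (volume (Set.Iic (t / c) ∩ Set.Ioo (0:ℝ) 1)) ^ n := by
      rw [Measure.map_apply hg measurableSet_Iic]
      have hpre : (fun ω => c * ⨆ i, u i ω) ⁻¹' Set.Iic t
          = ⋂ i, u i ⁻¹' Set.Iic (t / c) := by
        ext ω
        simp only [Set.mem_preimage, Set.mem_Iic, Set.mem_iInter]
        rw [mul_comm, ← le_div_iff₀ hc]
        exact ciSup_le_iff (Set.Finite.bddAbove (Set.finite_range _))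
      rw [hpre, hindep.meas_iInter
        (fun i => ⟨Set.Iic (t / c), measurableSet_Iic, rfl⟩)]
      have heach : ∀ i, P (u i ⁻¹' Set.Iic (t / c))
          = volume (Set.Iic (t / c) ∩ Set.Ioo (0:ℝ) 1) := by
        intro i
        rw [← Measure.map_apply (hmeas i) measurableSet_Iic, hunif i,
          Measure.restrict_apply measurableSet_Iic]
      simp only [heach]
      rw [Finset.prod_const, Finset.card_univ, Fintype.card_fin]
    -- RHS
    have hrhs : (volume.withDensity ((Set.Ioo (0:ℝ) c).indicator
        (fun θ => ENNReal.ofReal ((n : ℝ) * θ ^ (n - 1) / c ^ n)))) (Set.Iic t)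
        = ∫⁻ θ in Set.Ioo (0:ℝ) c ∩ Set.Iic t,
            ENNReal.ofReal ((n : ℝ) * θ ^ (n - 1) / c ^ n) := by
      rw [withDensity_apply _ measurableSet_Iic,
        lintegral_indicator measurableSet_Ioo _,
        Measure.restrict_restrict measurableSet_Ioo]
    rw [hlhs, hrhs]
    rcases le_or_gt t 0 with ht | ht
    · have h1 : Set.Iic (t / c) ∩ Set.Ioo (0:ℝ) 1 = ∅ := by
        ext x
        simp only [Set.mem_inter_iff, Set.mem_Iic, Set.mem_Ioo, Set.mem_empty_iff_false,
          iff_false, not_and]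
        intro hx hx0
        exact absurd (hx.trans (div_nonpos_of_nonpos_of_nonneg ht hc.le)) (not_le.mpr hx0)
      have h2 : Set.Ioo (0:ℝ) c ∩ Set.Iic t = ∅ := by
        ext x
        simp only [Set.mem_inter_iff, Set.mem_Ioo, Set.mem_Iic, Set.mem_empty_iff_false,
          iff_false, not_and]
        rintro ⟨hx0, -⟩ hxt
        exact absurd (hxt.trans ht) (not_le.mpr hx0)
      rw [h1, h2]
      simp [zero_pow (by omega : n ≠ 0)]
    · rcases lt_or_ge t c with htc | htc
      · have hs0 : 0 < t / c := div_pos ht hc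
        have hs1 : t / c < 1 := (div_lt_one hc).mpr htc
        have h1 : Set.Iic (t / c) ∩ Set.Ioo (0:ℝ) 1 = Set.Ioc 0 (t / c) := by
          ext x
          simp only [Set.mem_inter_iff, Set.mem_Iic, Set.mem_Ioo, Set.mem_Ioc]
          constructor
          · rintro ⟨hxs, hx0, -⟩; exact ⟨hx0, hxs⟩
          · rintro ⟨hx0, hxs⟩; exact ⟨hxs, hx0, lt_of_le_of_lt hxs hs1⟩
        have h2 : Set.Ioo (0:ℝ) c ∩ Set.Iic t = Set.Ioc 0 t := by
          ext x
          simp only [Set.mem_inter_iff, Set.mem_Ioo, Set.mem_Iic, Set.mem_Ioc]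
          constructor
          · rintro ⟨⟨hx0, -⟩, hxt⟩; exact ⟨hx0, hxt⟩
          · rintro ⟨hx0, hxt⟩; exact ⟨⟨hx0, lt_of_le_of_lt hxt htc⟩, hxt⟩
        rw [h1, h2, Real.volume_Ioc, sub_zero, power_lintegral n hn c hc t ht.le,
          ← ENNReal.ofReal_pow hs0.le, div_pow]
      · have hs1 : 1 ≤ t / c := (one_le_div hc).mpr htc
        have h1 : Set.Iic (t / c) ∩ Set.Ioo (0:ℝ) 1 = Set.Ioo 0 1 := by
          ext x
          simp only [Set.mem_inter_iff, Set.mem_Iic, Set.mem_Ioo]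
          exact ⟨fun h => h.2, fun h => ⟨(h.2.le.trans hs1), h⟩⟩
        have h2 : Set.Ioo (0:ℝ) c ∩ Set.Iic t = Set.Ioo 0 c := by
          ext x
          simp only [Set.mem_inter_iff, Set.mem_Ioo, Set.mem_Iic]
          exact ⟨fun h => h.1, fun h => ⟨h, h.2.le.trans htc⟩⟩
        rw [h1, h2, Real.volume_Ioo,
          Measure.restrict_congr_set Ioo_ae_eq_Ioc,
          power_lintegral n hn c hc c hc.le, div_self (pow_ne_zero n hc.ne'),
          sub_zero, ENNReal.ofReal_one, one_pow]
  · -- zero coverage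
    have hsub : {ω | θ₀ ≤ c * ⨆ i, u i ω}
        ⊆ {ω | ¬ (c * (⨆ i, u i ω) < c ∧ c < θ₀)} := by
      intro ω hω hcon
      exact absurd (lt_trans hcon.1 hcon.2) (not_lt.mpr hω)
    exact measure_mono_null hsub (ae_iff.mp haemax)
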